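/- With S(x) = ∑_{m≥1} F_m(x) and R(x) = ∑_{m≥1} m·F_m(x) as formal power series, the transfer relations imply S(x)·(1 − 2x) = x(1 − x)(1 + R(x)), i.e., S = x(1−x)(1+R)/(1−2x). -/

import Mathlib

open PowerSeries

/-- Sliding-product weight `∏_{i=1}^{k-1} (π_i + π_{i+1} - 1)`. -/
def slidingWeight (l : List ℕ) : ℕ :=
  ((l.zip l.tail).map fun p => p.1 + p.2 - 1).prod

/-- `F m`: the power series whose coefficient of `xᴺ` is the sum of the
sliding weight over compositions of `N` whose last part equals `m`. -/
noncomputable def F (m : ℕ) : ℚ⟦X⟧ :=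
  PowerSeries.mk fun N =>
    ((∑ c : Composition N,
        if c.blocks.getLast? = some m then slidingWeight c.blocks else 0 : ℕ) : ℚ)

/-- `S(x) = ∑_{m≥1} F_m(x)`, defined coefficientwise (only `m ≤ N` contribute
to the coefficient of `xᴺ` since `F_m` has order at least `m`). -/
noncomputable def Sx : ℚ⟦X⟧ :=
  PowerSeries.mk fun N => ∑ m ∈ Finset.Icc 1 N, (PowerSeries.coeff (R := ℚ) N) (F m)

/-- `R(x) = ∑_{m≥1} m·F_m(x)`, defined coefficientwise. -/
noncomputable def Rx : ℚ⟦X⟧ :=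
  PowerSeries.mk fun N => ∑ m ∈ Finset.Icc 1 N, (m : ℚ) * (PowerSeries.coeff (R := ℚ) N) (F m)

lemma zip_concat (a : ℕ) (l : List ℕ) (m : ℕ) :
    ((a :: l) ++ [m]).zip (((a :: l) ++ [m]).tail)
      = ((a :: l).zip l) ++ [((a :: l).getLast (List.cons_ne_nil a l), m)] := by
  induction l generalizing a with
  | nil => simp
  | cons b t ih =>
      have := ih b
      simp only [List.cons_append, List.zip_cons_cons, List.tail_cons] at this ⊢
      rw [this]
      simp [List.getLast]

def lastPart (l : List ℕ) : ℕ := l.getLast?.getD 0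

lemma lastPart_eq_getLast (l : List ℕ) (hl : l ≠ []) : lastPart l = l.getLast hl := by
  simp [lastPart, List.getLast?_eq_getLast hl]

lemma slidingWeight_concat (l : List ℕ) (hl : l ≠ []) (m : ℕ) :
    slidingWeight (l ++ [m]) = slidingWeight l * (lastPart l + m - 1) := by
  obtain ⟨a, t, rfl⟩ := List.exists_cons_of_ne_nil hl
  rw [lastPart_eq_getLast _ hl]
  unfold slidingWeight
  rw [zip_concat]
  simp

lemma blocks_ne_nil {N : ℕ} (hN : 1 ≤ N) (c : Composition N) : c.blocks ≠ [] := by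
  intro h
  have := c.blocks_sum
  rw [h] at this
  simp at this
  omega

lemma sigma_comp_eq {k1 k2 : ℕ} {c1 : Composition k1} {c2 : Composition k2}
    (h : c1.blocks = c2.blocks) : (⟨k1, c1⟩ : Σ k, Composition k) = ⟨k2, c2⟩ := by
  have hk : k1 = k2 := by rw [← c1.blocks_sum, ← c2.blocks_sum, h]
  subst hk
  simp [Composition.ext h]

/-- append a last block `N - k` to a composition of `k`, `1 ≤ k < N`;
junk value otherwise. -/
noncomputable def appendBlock (N : ℕ) (hN : 0 < N) (p : Σ k, Composition k) :
    Composition N :=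
  if h : p.1 < N then
    { blocks := p.2.blocks ++ [N - p.1]
      blocks_pos := by
        intro i hi
        rcases List.mem_append.1 hi with h' | h'
        · exact p.2.blocks_pos h'
        · simp at h'; omega
      blocks_sum := by rw [List.sum_append, p.2.blocks_sum]; simp; omega }
  else Composition.single N hN

lemma appendBlock_blocks (N : ℕ) (hN : 0 < N) (p : Σ k, Composition k) (h : p.1 < N) :
    (appendBlock N hN p).blocks = p.2.blocks ++ [N - p.1] := by
  rw [appendBlock, dif_pos h]

/-- drop the last block. -/
def dropBlock {N : ℕ} (c : Composition N) : Σ k, Composition k :=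
  ⟨c.blocks.dropLast.sum,
    { blocks := c.blocks.dropLast
      blocks_pos := fun hi => c.blocks_pos (List.dropLast_sublist _ |>.mem hi)
      blocks_sum := rfl }⟩

lemma key (N : ℕ) (hN : 1 ≤ N) :
    (∑ c : Composition N, slidingWeight c.blocks) =
      1 + ∑ k ∈ Finset.Ico 1 N, ∑ c : Composition k,
        slidingWeight c.blocks * (lastPart c.blocks + (N - k) - 1) := by
  classical
  have h0 : 0 < N := hN
  set c0 : Composition N := Composition.single N h0 with hc0
  have hW0 : slidingWeight c0.blocks = 1 := by
    simp [hc0, Composition.single_blocks, slidingWeight]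
  rw [← Finset.sum_erase_add _ _ (Finset.mem_univ c0), hW0, add_comm]
  congr 1
  rw [← Finset.sum_sigma ((Finset.Ico 1 N)) (fun k => (Finset.univ : Finset (Composition k)))
      (fun p => slidingWeight p.2.blocks * (lastPart p.2.blocks + (N - p.1) - 1))]
  refine (Finset.sum_nbij' (appendBlock N h0) dropBlock ?_ ?_ ?_ ?_ ?_).symm
  · -- appendBlock maps into erased set
    rintro ⟨k, c⟩ hp
    simp only [Finset.mem_sigma, Finset.mem_Ico] at hp
    refine Finset.mem_erase.2 ⟨?_, Finset.mem_univ _⟩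
    intro h
    have hb : c.blocks ++ [N - k] = [N] := by
      have := congrArg Composition.blocks h
      rwa [appendBlock_blocks N h0 _ hp.1.2, hc0, Composition.single_blocks] at this
    have hne := blocks_ne_nil hp.1.1 c
    have hlen := congrArg List.length hb
    simp only [List.length_append, List.length_singleton, List.length_cons,
      List.length_nil] at hlen
    have : 1 ≤ c.blocks.length := List.length_pos_iff.2 hne
    omega
  · -- dropBlock maps into sigma
    intro c hc
    simp only [Finset.mem_erase] at hc
    simp only [dropBlock, Finset.mem_sigma, Finset.mem_Ico, Finset.mem_univ, and_true]
    have hne := blocks_ne_nil hN c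
    have hlen2 : 2 ≤ c.blocks.length := by
      by_contra h
      push_neg at h
      interval_cases hl : c.blocks.length
      · exact hne (List.length_eq_zero_iff.1 hl)
      · obtain ⟨a, ha⟩ := List.length_eq_one_iff.1 hl
        apply hc.1
        apply Composition.ext
        have hsum := c.blocks_sum
        rw [ha] at hsum ⊢
        simp at hsum
        rw [hc0, Composition.single_blocks, hsum]
    have hdne : c.blocks.dropLast ≠ [] := by
      intro h
      have := congrArg List.length h
      simp [List.length_dropLast] at this
      omega
    constructor
    · obtain ⟨a, t, hat⟩ := List.exists_cons_of_ne_nil hdne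
      have ha : a ∈ c.blocks.dropLast := by rw [hat]; exact List.mem_cons_self
      have h1 := c.blocks_pos (List.dropLast_sublist _ |>.mem ha)
      calc 1 ≤ a := h1
        _ ≤ (c.blocks.dropLast).sum := by rw [hat, List.sum_cons]; omega
    · have : c.blocks.dropLast.sum + c.blocks.getLast hne = N := by
        have := c.blocks_sum
        conv at this => lhs; rw [← List.dropLast_concat_getLast hne]
        rw [List.sum_append] at this
        simpa using this
      have hpos := c.blocks_pos (List.getLast_mem hne)
      omega
  · -- left inverse
    rintro ⟨k, c⟩ hp
    simp only [Finset.mem_sigma, Finset.mem_Ico] at hp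
    apply sigma_comp_eq
    show (appendBlock N h0 ⟨k, c⟩).blocks.dropLast = c.blocks
    rw [appendBlock_blocks N h0 ⟨k, c⟩ hp.1.2]
    exact List.dropLast_concat
  · -- right inverse
    intro c hc
    simp only [Finset.mem_erase] at hc
    apply Composition.ext
    have hne := blocks_ne_nil hN c
    have hsum : c.blocks.dropLast.sum + c.blocks.getLast hne = N := by
      have := c.blocks_sum
      conv at this => lhs; rw [← List.dropLast_concat_getLast hne]
      rw [List.sum_append] at this
      simpa using this
    have hpos := c.blocks_pos (List.getLast_mem hne)
    have hlt : (dropBlock c).1 < N := by simp only [dropBlock]; omega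
    rw [appendBlock_blocks N h0 _ hlt]
    simp only [dropBlock]
    have h2 : N - c.blocks.dropLast.sum = c.blocks.getLast hne := by omega
    rw [h2]
    exact List.dropLast_concat_getLast hne
  · -- values agree
    rintro ⟨k, c⟩ hp
    simp only [Finset.mem_sigma, Finset.mem_Ico] at hp
    have hne := blocks_ne_nil hp.1.1 c
    show slidingWeight c.blocks * (lastPart c.blocks + (N - k) - 1)
        = slidingWeight (appendBlock N h0 ⟨k, c⟩).blocks
    rw [appendBlock_blocks N h0 ⟨k, c⟩ hp.1.2]
    exact (slidingWeight_concat c.blocks hne (N - k)).symm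

def sN (N : ℕ) : ℕ := ∑ c : Composition N, slidingWeight c.blocks
def rN (N : ℕ) : ℕ := ∑ c : Composition N, lastPart c.blocks * slidingWeight c.blocks

lemma lastPart_mem {N : ℕ} (hN : 1 ≤ N) (c : Composition N) :
    lastPart c.blocks ∈ Finset.Icc 1 N := by
  have hne := blocks_ne_nil hN c
  rw [lastPart_eq_getLast _ hne]
  refine Finset.mem_Icc.2 ⟨c.blocks_pos (List.getLast_mem hne), ?_⟩
  calc c.blocks.getLast hne ≤ c.blocks.sum :=
        List.single_le_sum (fun x _ => Nat.zero_le x) _ (List.getLast_mem hne)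
    _ = N := c.blocks_sum

lemma getLast?_eq_some_iff {N : ℕ} (hN : 1 ≤ N) (c : Composition N) (m : ℕ) :
    (c.blocks.getLast? = some m) ↔ m = lastPart c.blocks := by
  have hne := blocks_ne_nil hN c
  rw [List.getLast?_eq_getLast hne, lastPart_eq_getLast _ hne]
  constructor
  · intro h; exact (Option.some_injective _ h).symm
  · intro h; rw [h]

lemma coeff_Sx (N : ℕ) (hN : 1 ≤ N) : (coeff (R := ℚ) N) Sx = (sN N : ℚ) := by
  rw [Sx, coeff_mk]
  have : ∀ m, (coeff (R := ℚ) N) (F m)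
      = ((∑ c : Composition N,
          if c.blocks.getLast? = some m then slidingWeight c.blocks else 0 : ℕ) : ℚ) := by
    intro m; rw [F, coeff_mk]
  simp_rw [this]
  push_cast
  rw [Finset.sum_comm]
  rw [sN]
  push_cast
  refine Finset.sum_congr rfl fun c _ => ?_
  rw [Finset.sum_eq_single (lastPart c.blocks)]
  · rw [if_pos ((getLast?_eq_some_iff hN c _).2 rfl)]
  · intro b _ hb
    rw [if_neg]
    rw [getLast?_eq_some_iff hN c]
    exact hb
  · intro h
    exact absurd (lastPart_mem hN c) h

lemma coeff_Rx (N : ℕ) (hN : 1 ≤ N) : (coeff (R := ℚ) N) Rx = (rN N : ℚ) := by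
  rw [Rx, coeff_mk]
  have : ∀ m, (coeff (R := ℚ) N) (F m)
      = ((∑ c : Composition N,
          if c.blocks.getLast? = some m then slidingWeight c.blocks else 0 : ℕ) : ℚ) := by
    intro m; rw [F, coeff_mk]
  simp_rw [this]
  push_cast
  simp_rw [Finset.mul_sum]
  rw [Finset.sum_comm]
  rw [rN]
  push_cast
  refine Finset.sum_congr rfl fun c _ => ?_
  rw [Finset.sum_eq_single (lastPart c.blocks)]
  · rw [if_pos ((getLast?_eq_some_iff hN c _).2 rfl)]
  · intro b _ hb
    rw [if_neg, mul_zero]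
    rw [getLast?_eq_some_iff hN c]
    exact hb
  · intro h
    exact absurd (lastPart_mem hN c) h

lemma coeff_Sx_zero : (coeff (R := ℚ) 0) Sx = 0 := by simp [Sx, coeff_mk]
lemma coeff_Rx_zero : (coeff (R := ℚ) 0) Rx = 0 := by simp [Rx, coeff_mk]

-- small values
instance : Unique (Composition 1) := by
  refine ⟨⟨Composition.single 1 one_pos⟩, fun c => ?_⟩
  apply Composition.ext
  show c.blocks = (Composition.single 1 one_pos).blocks
  rw [Composition.single_blocks]
  have hne := blocks_ne_nil le_rfl c
  obtain ⟨a, t, hat⟩ := List.exists_cons_of_ne_nil hne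
  have hsum := c.blocks_sum
  rw [hat, List.sum_cons] at hsum
  have ha : 0 < a := c.blocks_pos (by rw [hat]; exact List.mem_cons_self)
  have ht : t = [] := by
    rcases t with _ | ⟨b, t'⟩
    · rfl
    · exfalso
      have hb : 0 < b := c.blocks_pos (by rw [hat]; simp)
      rw [List.sum_cons] at hsum
      omega
  rw [ht] at hsum hat
  simp only [List.sum_nil] at hsum
  rw [hat]
  have : a = 1 := by omega
  rw [this]

lemma sN_one : sN 1 = 1 := by
  rw [sN, Fintype.sum_unique]
  show slidingWeight (Composition.single 1 one_pos).blocks = 1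
  rw [Composition.single_blocks]
  simp [slidingWeight]

lemma rN_one : rN 1 = 1 := by
  rw [rN, Fintype.sum_unique]
  show lastPart (Composition.single 1 one_pos).blocks * slidingWeight (Composition.single 1 one_pos).blocks = 1
  rw [Composition.single_blocks]
  simp [slidingWeight, lastPart]

lemma key2 (N : ℕ) (hN : 1 ≤ N) :
    sN N = 1 + ∑ k ∈ Finset.Ico 1 N, (rN k + (N - k - 1) * sN k) := by
  rw [sN, key N hN]
  congr 1
  refine Finset.sum_congr rfl fun k hk => ?_
  rw [Finset.mem_Ico] at hk
  rw [rN, sN, Finset.mul_sum, ← Finset.sum_add_distrib]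
  refine Finset.sum_congr rfl fun c _ => ?_
  have hl : 1 ≤ lastPart c.blocks := (Finset.mem_Icc.1 (lastPart_mem hk.1 c)).1
  have hNk : 1 ≤ N - k := by omega
  have : lastPart c.blocks + (N - k) - 1 = lastPart c.blocks + (N - k - 1) := by omega
  rw [this, Nat.mul_add]
  ring

lemma diff (M : ℕ) (hM : 1 ≤ M) :
    sN (M + 1) = sN M + rN M + ∑ k ∈ Finset.Ico 1 M, sN k := by
  rw [key2 (M + 1) (by omega), Finset.sum_Ico_succ_top hM]
  have h1 : M + 1 - M - 1 = 0 := by omega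
  rw [h1, Nat.zero_mul, Nat.add_zero]
  have h2 : ∑ k ∈ Finset.Ico 1 M, (rN k + (M + 1 - k - 1) * sN k)
      = ∑ k ∈ Finset.Ico 1 M, ((rN k + (M - k - 1) * sN k) + sN k) := by
    refine Finset.sum_congr rfl fun k hk => ?_
    rw [Finset.mem_Ico] at hk
    have : M + 1 - k - 1 = (M - k - 1) + 1 := by omega
    rw [this]
    ring
  rw [h2, Finset.sum_add_distrib, key2 M hM]
  ring

lemma sN_two : sN 2 = 2 := by
  rw [diff 1 le_rfl, sN_one, rN_one]
  simp

/-- The transfer relations imply `S(x)·(1 − 2x) = x(1 − x)(1 + R(x))`. -/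
theorem S_closed_relation : Sx * (1 - 2 * X) = X * (1 - X) * (1 + Rx) := by
  have lhs_eq : Sx * (1 - 2 * X) = Sx - ((Sx * X) + (Sx * X)) := by ring
  have rhs_eq : X * (1 - X) * (1 + Rx) = (X + Rx * X) - (X * X + (Rx * X) * X) := by ring
  rw [lhs_eq, rhs_eq]
  ext N
  rw [map_sub, map_add, map_sub, map_add, map_add]
  rcases N with _ | n
  · rw [coeff_Sx_zero]
    rw [coeff_zero_eq_constantCoeff]
    simp [map_mul, constantCoeff_X]
  · rw [coeff_succ_mul_X, coeff_succ_mul_X, coeff_succ_mul_X, coeff_succ_mul_X, coeff_X]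
    rcases n with _ | n
    · rw [coeff_Sx 1 le_rfl, sN_one, coeff_Sx_zero, coeff_Rx_zero, coeff_X,
        coeff_zero_eq_constantCoeff, map_mul, constantCoeff_X]
      norm_num
    rcases n with _ | n
    · rw [coeff_Sx 2 (by norm_num), sN_two, coeff_Sx 1 le_rfl, sN_one,
        coeff_Rx 1 le_rfl, rN_one, coeff_X, coeff_succ_mul_X, coeff_Rx_zero]
      norm_num
    · -- N = n + 3
      rw [coeff_Sx (n+3) (by omega), coeff_Sx (n+2) (by omega),
        coeff_Rx (n+2) (by omega), coeff_succ_mul_X, coeff_Rx (n+1) (by omega),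
        coeff_X]
      have hd1 := diff (n+2) (by omega)
      have hd2 := diff (n+1) (by omega)
      have hs : ∑ k ∈ Finset.Ico 1 (n+2), sN k
          = (∑ k ∈ Finset.Ico 1 (n+1), sN k) + sN (n+1) :=
        Finset.sum_Ico_succ_top (by omega) _
      have c1 : (sN (n+3) : ℚ) = sN (n+2) + rN (n+2) + ∑ k ∈ Finset.Ico 1 (n+2), (sN k : ℚ) := by
        exact_mod_cast hd1
      have c2 : (sN (n+2) : ℚ) = sN (n+1) + rN (n+1) + ∑ k ∈ Finset.Ico 1 (n+1), (sN k : ℚ) := by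
        exact_mod_cast hd2
      have c3 : (∑ k ∈ Finset.Ico 1 (n+2), (sN k : ℚ))
          = (∑ k ∈ Finset.Ico 1 (n+1), (sN k : ℚ)) + sN (n+1) := by
        exact_mod_cast hs
      have hn3 : ¬ (n + 3 = 1) := by omega
      rw [if_neg hn3]
      simp only [if_neg (by omega : ¬ (n + 2 = 1))]
      linarith [c1, c2, c3]
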